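/- For every odd integer p ≥ 3 and every even positive integer m, the series ∑_{n=1}^∞ [∑_{k=1}^{(p-1)/2} L_{2k·m·p^n}] / F_{m·p^{n+1}} converges with sum 1/F_{mp}. -/

import Mathlib

open goldenRatio Real

/-- The Lucas numbers: L 0 = 2, L 1 = 1, L (n+2) = L n + L (n+1). -/
def lucas : ℕ → ℕ
  | 0 => 2
  | 1 => 1
  | n + 2 => lucas n + lucas (n + 1)

lemma lucas_binet : ∀ n : ℕ, (lucas n : ℝ) = φ ^ n + ψ ^ n := by
  intro n
  induction n using Nat.twoStepInduction with
  | zero => norm_num [lucas]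
  | one => simp [lucas, goldenRatio_add_goldenConj]
  | more n ih1 ih2 =>
    have h1 : φ ^ (n + 2) = φ ^ n * (φ + 1) := by rw [← goldenRatio_sq]; ring
    have h2 : ψ ^ (n + 2) = ψ ^ n * (ψ + 1) := by rw [← goldenConj_sq]; ring
    show ((lucas n + lucas (n+1) : ℕ) : ℝ) = _
    push_cast [ih1, ih2, h1, h2]
    ring

lemma keyB (D N : ℕ) (hN : Even N) :
    (Nat.fib N : ℝ) * lucas (D + N) = Nat.fib (D + 2 * N) - Nat.fib D := by
  have h5 : (Real.sqrt 5) ≠ 0 := by positivity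
  have h1 : φ ^ N * ψ ^ N = 1 := by
    rw [← mul_pow, goldenRatio_mul_goldenConj, hN.neg_one_pow]
  rw [Real.coe_fib_eq, Real.coe_fib_eq, Real.coe_fib_eq, lucas_binet]
  have key : (φ ^ N - ψ ^ N) * (φ ^ (D + N) + ψ ^ (D + N))
      = (φ ^ (D + 2 * N) - ψ ^ (D + 2 * N)) - (φ ^ D - ψ ^ D) := by
    rw [pow_add, pow_add, pow_add, pow_add, two_mul, pow_add, pow_add]
    linear_combination (ψ ^ D - φ ^ D) * h1
  rw [div_mul_eq_mul_div, key, sub_div]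

lemma sumC (K N : ℕ) (hN : Even N) :
    (∑ k ∈ Finset.Icc 1 K, (lucas (2 * k * N) : ℝ)) * Nat.fib N
      = Nat.fib ((2 * K + 1) * N) - Nat.fib N := by
  induction K with
  | zero => simp
  | succ K ih =>
    rw [Finset.sum_Icc_succ_top (by omega), add_mul, ih]
    have : 2 * (K + 1) * N = (2 * K + 1) * N + N := by ring
    rw [this, mul_comm ((lucas ((2 * K + 1) * N + N) : ℝ)), keyB _ _ hN]
    have : (2 * K + 1) * N + 2 * N = (2 * (K + 1) + 1) * N := by ring
    rw [this]
    ring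

theorem stmt18 (p m : ℕ) (hp : Odd p) (hp' : 3 ≤ p) (hm : Even m) (hm' : 0 < m) :
    HasSum
      (fun n : ℕ =>
        (∑ k ∈ Finset.Icc 1 ((p - 1) / 2), (lucas (2 * k * m * p ^ (n + 1)) : ℝ)) /
          (Nat.fib (m * p ^ (n + 2)) : ℝ))
      (1 / (Nat.fib (m * p) : ℝ)) := by
  set g : ℕ → ℝ := fun n => 1 / (Nat.fib (m * p ^ (n + 1)) : ℝ) with hg
  have hppos : 0 < p := by omega
  have hfib : ∀ n : ℕ, (0:ℝ) < Nat.fib (m * p ^ (n + 1)) := by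
    intro n
    have : 0 < m * p ^ (n + 1) := by positivity
    exact_mod_cast Nat.fib_pos.mpr this
  have hptw : ∀ n : ℕ,
      (∑ k ∈ Finset.Icc 1 ((p - 1) / 2), (lucas (2 * k * m * p ^ (n + 1)) : ℝ)) /
          (Nat.fib (m * p ^ (n + 2)) : ℝ) = g n - g (n + 1) := by
    intro n
    have hNe : Even (m * p ^ (n + 1)) := hm.mul_right _
    have hsum := sumC ((p - 1) / 2) (m * p ^ (n + 1)) hNe
    have hidx : (2 * ((p - 1) / 2) + 1) = p := by
      obtain ⟨t, ht⟩ := hp; omega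
    have hidx2 : (2 * ((p - 1) / 2) + 1) * (m * p ^ (n + 1)) = m * p ^ (n + 2) := by
      rw [hidx]; ring
    have hterm : ∀ k, 2 * k * m * p ^ (n + 1) = 2 * k * (m * p ^ (n + 1)) := by
      intro k; ring
    rw [hidx2] at hsum
    simp only [hterm]
    have h1 := hfib n
    have h2 := hfib (n + 1)
    rw [hg]
    field_simp
    simp only [hterm, mul_comm] at hsum ⊢
    linear_combination hsum
  have hnonneg : ∀ n : ℕ, (0:ℝ) ≤
      (∑ k ∈ Finset.Icc 1 ((p - 1) / 2), (lucas (2 * k * m * p ^ (n + 1)) : ℝ)) /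
          (Nat.fib (m * p ^ (n + 2)) : ℝ) := by
    intro n
    apply div_nonneg
    · exact Finset.sum_nonneg fun k _ => by positivity
    · positivity
  rw [hasSum_iff_tendsto_nat_of_nonneg hnonneg]
  have hpartial : ∀ n : ℕ,
      (∑ i ∈ Finset.range n,
        (∑ k ∈ Finset.Icc 1 ((p - 1) / 2), (lucas (2 * k * m * p ^ (i + 1)) : ℝ)) /
          (Nat.fib (m * p ^ (i + 2)) : ℝ)) = g 0 - g n := by
    intro n
    rw [Finset.sum_congr rfl fun i _ => hptw i, Finset.sum_range_sub' g]
  simp only [hpartial]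
  have hg0 : g 0 = 1 / (Nat.fib (m * p) : ℝ) := by simp [hg]
  have hgto : Filter.Tendsto g Filter.atTop (nhds 0) := by
    refine squeeze_zero (f := g) (g := fun n => 1 / ((n:ℝ) + 1)) (fun n => ?_) (fun n => ?_)
        tendsto_one_div_add_atTop_nhds_zero_nat
    · rw [hg]; positivity
    · 
      have hle : n + 1 ≤ Nat.fib (m * p ^ (n + 1)) := by
        have h3 : n + 1 < 3 ^ (n + 1) := Nat.lt_pow_self (by norm_num)
        have h4 : 3 ^ (n + 1) ≤ p ^ (n + 1) := Nat.pow_le_pow_left hp' _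
        have h5 : p ^ (n + 1) ≤ m * p ^ (n + 1) := Nat.le_mul_of_pos_left _ hm'
        have h6 : 5 ≤ m * p ^ (n + 1) := by
          have : 2 ≤ m := by
            obtain ⟨t, ht⟩ := hm; omega
          have : 3 ≤ p ^ (n + 1) := le_trans (Nat.le_self_pow (by omega) 3) h4
          nlinarith
        have h7 := Nat.le_fib_self h6
        omega
      rw [hg]
      apply one_div_le_one_div_of_le (by positivity)
      exact_mod_cast hle
  rw [← hg0]
  have := hgto.const_sub (g 0)
  simpa using this
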